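/- Rains relative entropy of approximate e-bits (sandwiched Rényi version): let ε ∈ [0,1], let Φ̃^d be a state on H_Â⊗H_B̂ with dim H_Â = dim H_B̂ = d, and suppose F(Φ̃^d, Φ^d) ≥ 1−ε. Then for all α > 1, log₂ d ≤ R̃_α(Φ̃^d) + (α/(α−1)) log₂(1/(1−ε)). -/

import Mathlib

open scoped Matrix Classical ComplexOrder

namespace RainsPaper

/-- Natural matrix logarithm of a Hermitian matrix via spectral decomposition
(with the convention `log 0 = 0` on the kernel); junk value `0` otherwise. -/
noncomputable def matLog {n : Type} [Fintype n] [DecidableEq n] (A : Matrix n n ℂ) :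
    Matrix n n ℂ :=
  if hA : A.IsHermitian then
    (hA.eigenvectorUnitary : Matrix n n ℂ) *
      (Matrix.diagonal fun i => (Real.log (hA.eigenvalues i) : ℂ)) *
      (star (hA.eigenvectorUnitary : Matrix n n ℂ))
  else 0

/-- Real power of a Hermitian matrix via spectral decomposition (with the convention
`0 ^ r = 0` for `r ≠ 0`, so negative powers are taken on the support);
junk value `0` otherwise. -/
noncomputable def matPow {n : Type} [Fintype n] [DecidableEq n] (A : Matrix n n ℂ) (r : ℝ) :
    Matrix n n ℂ :=
  if hA : A.IsHermitian then
    (hA.eigenvectorUnitary : Matrix n n ℂ) *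
      (Matrix.diagonal fun i => ((hA.eigenvalues i ^ r : ℝ) : ℂ)) *
      (star (hA.eigenvectorUnitary : Matrix n n ℂ))
  else 0

/-- A state is a positive semidefinite operator with unit trace. -/
def IsState {n : Type} [Fintype n] (ρ : Matrix n n ℂ) : Prop :=
  ρ.PosSemidef ∧ ρ.trace = 1

/-- `supp ω ⊆ supp τ`, expressed (for Hermitian matrices) as `ker τ ⊆ ker ω`. -/
def SuppSubset {n : Type} [Fintype n] (ω τ : Matrix n n ℂ) : Prop :=
  ∀ v : n → ℂ, τ.mulVec v = 0 → ω.mulVec v = 0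

/-- Trace norm `‖X‖₁ = Tr √(X†X)`. -/
noncomputable def traceNorm {n : Type} [Fintype n] [DecidableEq n] (X : Matrix n n ℂ) : ℝ :=
  ((matPow (Xᴴ * X) 2⁻¹).trace).re

/-- Fidelity `F(ω,τ) = ‖√ω √τ‖₁²`. -/
noncomputable def fidelity {n : Type} [Fintype n] [DecidableEq n] (ω τ : Matrix n n ℂ) : ℝ :=
  (traceNorm (matPow ω 2⁻¹ * matPow τ 2⁻¹)) ^ 2

/-- Extended base-2 logarithm: `elog2 x = log₂ x` for `x > 0` and `-∞` for `x ≤ 0`. -/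
noncomputable def elog2 (x : ℝ) : EReal :=
  if x ≤ 0 then ⊥ else ((Real.logb 2 x : ℝ) : EReal)

/-- Quantum relative entropy `D(ω‖τ) = Tr[ω (log₂ ω - log₂ τ)]` if `supp ω ⊆ supp τ`,
and `+∞` otherwise. -/
noncomputable def qRelEnt {n : Type} [Fintype n] [DecidableEq n] (ω τ : Matrix n n ℂ) : EReal :=
  if SuppSubset ω τ then
    ((((ω * (matLog ω - matLog τ)).trace).re / Real.log 2 : ℝ) : EReal)
  else ⊤

/-- Sandwiched Rényi relative entropy
`D̃_α(ω‖τ) = (α-1)⁻¹ log₂ Tr[(τ^{(1-α)/(2α)} ω τ^{(1-α)/(2α)})^α]` when `α ∈ (0,1)`, or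
`α > 1` and `supp ω ⊆ supp τ`; `+∞` otherwise. -/
noncomputable def sandRenyi {n : Type} [Fintype n] [DecidableEq n] (α : ℝ)
    (ω τ : Matrix n n ℂ) : EReal :=
  if (0 < α ∧ α < 1) ∨ (1 < α ∧ SuppSubset ω τ) then
    (((α - 1)⁻¹ : ℝ) : EReal) *
      elog2 (((matPow (matPow τ ((1 - α) / (2 * α)) * ω * matPow τ ((1 - α) / (2 * α))) α).trace).re)
  else ⊤

/-- Petz Rényi relative entropy `D_α(ω‖τ) = (α-1)⁻¹ log₂ Tr[ω^α τ^{1-α}]` when `α ∈ (0,1)`,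
or `α > 1` and `supp ω ⊆ supp τ`; `+∞` otherwise. -/
noncomputable def petzRenyi {n : Type} [Fintype n] [DecidableEq n] (α : ℝ)
    (ω τ : Matrix n n ℂ) : EReal :=
  if (0 < α ∧ α < 1) ∨ (1 < α ∧ SuppSubset ω τ) then
    (((α - 1)⁻¹ : ℝ) : EReal) * elog2 (((matPow ω α * matPow τ (1 - α)).trace).re)
  else ⊤

/-- Geometric Rényi relative entropy `D̂_α(ω‖τ) = (α-1)⁻¹ log₂ Tr[τ (τ^{-1/2} ω τ^{-1/2})^α]`
(inverses on the support) when `α ∈ (0,1)`, or `α > 1` and `supp ω ⊆ supp τ`; `+∞` otherwise. -/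
noncomputable def geomRenyi {n : Type} [Fintype n] [DecidableEq n] (α : ℝ)
    (ω τ : Matrix n n ℂ) : EReal :=
  if (0 < α ∧ α < 1) ∨ (1 < α ∧ SuppSubset ω τ) then
    (((α - 1)⁻¹ : ℝ) : EReal) *
      elog2 (((τ * matPow (matPow τ (-2⁻¹) * ω * matPow τ (-2⁻¹)) α).trace).re)
  else ⊤

/-- Classical relative entropy `D(p‖q)`, equal to `+∞` unless `supp p ⊆ supp q`
(terms with `p x = 0` contribute zero). -/
noncomputable def cRelEnt {X : Type} [Fintype X] (p q : X → ℝ) : EReal :=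
  if ∀ x, p x ≠ 0 → q x ≠ 0 then
    ((∑ x, p x * Real.logb 2 (p x / q x) : ℝ) : EReal)
  else ⊤

/-- `p` is a probability distribution on the finite set `X`. -/
def IsProb {X : Type} [Fintype X] (p : X → ℝ) : Prop :=
  (∀ x, 0 ≤ p x) ∧ ∑ x, p x = 1

/-- The classical–quantum operator `∑ x p(x) |x⟩⟨x| ⊗ K x`. -/
noncomputable def cqOp {X A : Type} [DecidableEq X] (p : X → ℝ)
    (K : X → Matrix A A ℂ) : Matrix (X × A) (X × A) ℂ :=
  Matrix.of fun a b => if a.1 = b.1 then (p a.1 : ℂ) * K a.1 a.2 b.2 else 0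

/-- Partial transpose (on the second tensor factor):
`(id ⊗ T)(X)_{(i,k),(j,l)} = X_{(i,l),(j,k)}`. -/
def ptrans {a b : Type} (X : Matrix (a × b) (a × b) ℂ) : Matrix (a × b) (a × b) ℂ :=
  Matrix.of fun p q => X (p.1, q.2) (q.1, p.2)

/-- The partial transpose as a linear map. -/
def ptransL {a b : Type} : Matrix (a × b) (a × b) ℂ →ₗ[ℂ] Matrix (a × b) (a × b) ℂ where
  toFun := ptrans
  map_add' _ _ := rfl
  map_smul' _ _ := rfl

/-- `PPT'` : positive semidefinite bipartite operators whose partial transpose has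
trace norm at most 1. -/
def PPTprime {a b : Type} [Fintype a] [Fintype b] [DecidableEq a] [DecidableEq b]
    (σ : Matrix (a × b) (a × b) ℂ) : Prop :=
  σ.PosSemidef ∧ traceNorm (ptrans σ) ≤ 1

/-- The Rains relative entropy `R(ρ) = inf_{σ ∈ PPT'} D(ρ‖σ)`. -/
noncomputable def Rains {a b : Type} [Fintype a] [Fintype b] [DecidableEq a] [DecidableEq b]
    (ρ : Matrix (a × b) (a × b) ℂ) : EReal :=
  ⨅ σ : {σ : Matrix (a × b) (a × b) ℂ // PPTprime σ}, qRelEnt ρ σ.1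

/-- The sandwiched Rényi Rains relative entropy `R̃_α(ρ) = inf_{σ ∈ PPT'} D̃_α(ρ‖σ)`. -/
noncomputable def sandRains {a b : Type} [Fintype a] [Fintype b] [DecidableEq a] [DecidableEq b]
    (α : ℝ) (ρ : Matrix (a × b) (a × b) ℂ) : EReal :=
  ⨅ σ : {σ : Matrix (a × b) (a × b) ℂ // PPTprime σ}, sandRenyi α ρ σ.1

/-- The extension `id_{Fin k} ⊗ Φ` of a linear map on matrices. -/
def matExt {n m : Type} [Fintype n] [Fintype m]
    (Φ : Matrix n n ℂ →ₗ[ℂ] Matrix m m ℂ) (k : ℕ)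
    (X : Matrix (Fin k × n) (Fin k × n) ℂ) : Matrix (Fin k × m) (Fin k × m) ℂ :=
  Matrix.of fun p q => Φ (Matrix.of fun i j => X (p.1, i) (q.1, j)) p.2 q.2

/-- Complete positivity: all extensions `id_k ⊗ Φ` preserve positive semidefiniteness. -/
def IsCP {n m : Type} [Fintype n] [Fintype m]
    (Φ : Matrix n n ℂ →ₗ[ℂ] Matrix m m ℂ) : Prop :=
  ∀ (k : ℕ) (X : Matrix (Fin k × n) (Fin k × n) ℂ), X.PosSemidef → (matExt Φ k X).PosSemidef

/-- Trace preservation. -/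
def IsTP {n m : Type} [Fintype n] [Fintype m]
    (Φ : Matrix n n ℂ →ₗ[ℂ] Matrix m m ℂ) : Prop :=
  ∀ X : Matrix n n ℂ, (Φ X).trace = X.trace

/-- A selective PPT operation: a family of completely positive maps `P x` such that
`(id ⊗ T) ∘ P x ∘ (id ⊗ T)` is completely positive for every `x` and `∑ x, P x` is
trace preserving. -/
def IsSelectivePPT {a b a' b' X : Type} [Fintype a] [Fintype b] [Fintype a'] [Fintype b']
    [Fintype X]
    (P : X → (Matrix (a × b) (a × b) ℂ →ₗ[ℂ] Matrix (a' × b') (a' × b') ℂ)) : Prop :=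
  (∀ x, IsCP (P x)) ∧ (∀ x, IsCP (ptransL ∘ₗ P x ∘ₗ ptransL)) ∧
    (∀ ρ : Matrix (a × b) (a × b) ℂ, ∑ x, ((P x) ρ).trace = ρ.trace)

/-- The maximally entangled state `Φ^d = |Φ^d⟩⟨Φ^d|`, `|Φ^d⟩ = d^{-1/2} ∑ i |i⟩|i⟩`. -/
noncomputable def maxEnt (d : ℕ) : Matrix (Fin d × Fin d) (Fin d × Fin d) ℂ :=
  Matrix.of fun p q => if p.1 = p.2 ∧ q.1 = q.2 then ((d : ℂ))⁻¹ else 0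

/-- Binary entropy `h₂(ε) = -ε log₂ ε - (1-ε) log₂ (1-ε)`. -/
noncomputable def h2 (ε : ℝ) : ℝ :=
  -ε * Real.logb 2 ε - (1 - ε) * Real.logb 2 (1 - ε)



open Matrix Complex

variable {n : Type} [Fintype n] [DecidableEq n]

lemma udu_mul (U : Matrix n n ℂ) (hU : star U * U = 1) (f g : n → ℂ) :
    (U * Matrix.diagonal f * star U) * (U * Matrix.diagonal g * star U)
      = U * Matrix.diagonal (fun i => f i * g i) * star U := by
  have h : (U * Matrix.diagonal f * star U) * (U * Matrix.diagonal g * star U)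
      = U * (Matrix.diagonal f * (star U * U) * Matrix.diagonal g) * star U := by
    simp only [Matrix.mul_assoc]
  rw [h, hU, Matrix.mul_one, Matrix.diagonal_mul_diagonal]

lemma trace_udu (U : Matrix n n ℂ) (hU : star U * U = 1) (f : n → ℂ) :
    (U * Matrix.diagonal f * star U).trace = ∑ i, f i := by
  rw [Matrix.trace_mul_comm, ← Matrix.mul_assoc, hU, Matrix.one_mul, Matrix.trace_diagonal]

lemma quadForm (U : Matrix n n ℂ) (g : n → ℝ) (v : n → ℂ) :
    star v ⬝ᵥ (U * Matrix.diagonal (fun i => (g i : ℂ)) * star U) *ᵥ v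
      = ((∑ i, g i * Complex.normSq ((star U *ᵥ v) i) : ℝ) : ℂ) := by
  have h1 : (U * Matrix.diagonal (fun i => (g i : ℂ)) * star U) *ᵥ v
      = U *ᵥ (Matrix.diagonal (fun i => (g i : ℂ)) *ᵥ (star U *ᵥ v)) := by
    simp [Matrix.mulVec_mulVec, Matrix.mul_assoc]
  rw [h1, Matrix.dotProduct_mulVec]
  have h2 : star v ᵥ* U = star (star U *ᵥ v) := by
    rw [Matrix.star_mulVec, Matrix.star_eq_conjTranspose, Matrix.conjTranspose_conjTranspose]
  rw [h2]
  set w := star U *ᵥ v with hw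
  simp only [dotProduct, Matrix.mulVec_diagonal, Pi.star_apply, RCLike.star_def]
  push_cast
  refine Finset.sum_congr rfl fun i _ => ?_
  rw [show (starRingEnd ℂ) (w i) * ((g i : ℂ) * w i)
      = (g i : ℂ) * (w i * (starRingEnd ℂ) (w i)) by ring, Complex.mul_conj]

lemma isHermitian_udu (U : Matrix n n ℂ) (g : n → ℝ) :
    (U * Matrix.diagonal (fun i => (g i : ℂ)) * star U).IsHermitian := by
  unfold Matrix.IsHermitian
  rw [Matrix.conjTranspose_mul, Matrix.conjTranspose_mul, Matrix.star_eq_conjTranspose,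
    Matrix.conjTranspose_conjTranspose, Matrix.diagonal_conjTranspose]
  have : star (fun i => (g i : ℂ)) = fun i => (g i : ℂ) := by
    funext i; simp
  rw [this, Matrix.mul_assoc]

lemma posSemidef_udu (U : Matrix n n ℂ) (g : n → ℝ) (hg : ∀ i, 0 ≤ g i) :
    (U * Matrix.diagonal (fun i => (g i : ℂ)) * star U).PosSemidef := by
  refine Matrix.PosSemidef.of_dotProduct_mulVec_nonneg (isHermitian_udu U g) fun v => ?_
  rw [quadForm]
  rw [Complex.zero_le_real]
  exact Finset.sum_nonneg fun i _ => mul_nonneg (hg i) (Complex.normSq_nonneg _)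

section herm

variable {A : Matrix n n ℂ}

lemma matPow_eq (hA : A.IsHermitian) (r : ℝ) :
    matPow A r = (hA.eigenvectorUnitary : Matrix n n ℂ) *
      (Matrix.diagonal fun i => ((hA.eigenvalues i ^ r : ℝ) : ℂ)) *
      (star (hA.eigenvectorUnitary : Matrix n n ℂ)) := by
  rw [matPow, dif_pos hA]

lemma star_eU_mul (hA : A.IsHermitian) : star (hA.eigenvectorUnitary : Matrix n n ℂ) *
    (hA.eigenvectorUnitary : Matrix n n ℂ) = 1 :=
  Matrix.mem_unitaryGroup_iff'.mp (hA.eigenvectorUnitary).2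

lemma eU_mul_star (hA : A.IsHermitian) : (hA.eigenvectorUnitary : Matrix n n ℂ) *
    star (hA.eigenvectorUnitary : Matrix n n ℂ) = 1 :=
  Matrix.mem_unitaryGroup_iff.mp (hA.eigenvectorUnitary).2

lemma spectral' (hA : A.IsHermitian) : A = (hA.eigenvectorUnitary : Matrix n n ℂ) *
      (Matrix.diagonal fun i => ((hA.eigenvalues i : ℝ) : ℂ)) *
      (star (hA.eigenvectorUnitary : Matrix n n ℂ)) := by
  have := hA.spectral_theorem
  rw [Unitary.conjStarAlgAut_apply] at this
  exact this

lemma isHermitian_matPow (hA : A.IsHermitian) (r : ℝ) : (matPow A r).IsHermitian := by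
  rw [matPow_eq hA r]; exact isHermitian_udu _ _

lemma matPow_mul_matPow {r s t : ℝ} (hA' : A.PosSemidef)
    (h : ∀ x : ℝ, 0 ≤ x → x ^ r * x ^ s = x ^ t) :
    matPow A r * matPow A s = matPow A t := by
  have hA := hA'.1
  rw [matPow_eq hA r, matPow_eq hA s, matPow_eq hA t, udu_mul _ (star_eU_mul hA)]
  have he : (fun i => ((hA.eigenvalues i ^ r : ℝ) : ℂ) * ((hA.eigenvalues i ^ s : ℝ) : ℂ))
      = fun i => ((hA.eigenvalues i ^ t : ℝ) : ℂ) :=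
    funext fun i => by rw [← Complex.ofReal_mul, h _ (hA'.eigenvalues_nonneg i)]
  rw [he]

lemma posSemidef_matPow (hA' : A.PosSemidef) (r : ℝ) : (matPow A r).PosSemidef := by
  rw [matPow_eq hA'.1 r]
  exact posSemidef_udu _ _ fun i => Real.rpow_nonneg (hA'.eigenvalues_nonneg i) r

end herm

lemma sqrtUnique {B C : Matrix n n ℂ} (hB : B.PosSemidef) (hC : C.PosSemidef)
    (h : C * C = B) : matPow B 2⁻¹ = C := by
  have h1 : matPow B 2⁻¹ * matPow B 2⁻¹ = matPow B 1 :=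
    matPow_mul_matPow hB (fun x hx => by
      rcases eq_or_lt_of_le hx with h0 | h0
      · simp [← h0, Real.zero_rpow, Real.rpow_natCast]
      · rw [← Real.rpow_add h0]; norm_num)
  have h2 : matPow B 1 = B := by
    rw [matPow_eq hB.1 1]
    simpa using (spectral' hB.1).symm
  have hPsd : (matPow B 2⁻¹).PosSemidef := posSemidef_matPow hB 2⁻¹
  open scoped MatrixOrder in
  have := (CFC.sqrt_eq_iff B C hB.nonneg hC.nonneg).mpr h
  open scoped MatrixOrder in
  have h3 := (CFC.sqrt_eq_iff B (matPow B 2⁻¹) hB.nonneg hPsd.nonneg).mpr (by rw [h1, h2])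
  rw [← h3]
  exact this

lemma traceNorm_hermitian {T : Matrix n n ℂ} (hT : T.IsHermitian) :
    traceNorm T = ∑ i, |hT.eigenvalues i| := by
  have hTT : Tᴴ * T = T * T := by rw [hT.eq]
  have habs : ((hT.eigenvectorUnitary : Matrix n n ℂ) *
      (Matrix.diagonal fun i => ((|hT.eigenvalues i| : ℝ) : ℂ)) *
      (star (hT.eigenvectorUnitary : Matrix n n ℂ))) * ((hT.eigenvectorUnitary : Matrix n n ℂ) *
      (Matrix.diagonal fun i => ((|hT.eigenvalues i| : ℝ) : ℂ)) *
      (star (hT.eigenvectorUnitary : Matrix n n ℂ))) = Tᴴ * T := by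
    rw [udu_mul _ (star_eU_mul hT), hTT]
    conv_rhs => rw [spectral' hT]
    rw [udu_mul _ (star_eU_mul hT)]
    have he : (fun i => ((|hT.eigenvalues i| : ℝ) : ℂ) * ((|hT.eigenvalues i| : ℝ) : ℂ))
        = fun i => ((hT.eigenvalues i : ℝ) : ℂ) * ((hT.eigenvalues i : ℝ) : ℂ) :=
      funext fun i => by rw [← Complex.ofReal_mul, ← Complex.ofReal_mul, abs_mul_abs_self]
    rw [he]
  have hpsd : (Tᴴ * T).PosSemidef := Matrix.posSemidef_conjTranspose_mul_self T
  have := sqrtUnique hpsd (posSemidef_udu _ _ (fun i => abs_nonneg _)) habs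
  rw [traceNorm, this, trace_udu _ (star_eU_mul hT)]
  rw [show (∑ i, ((|hT.eigenvalues i| : ℝ) : ℂ)) = ((∑ i, |hT.eigenvalues i| : ℝ) : ℂ) by
    push_cast; ring, Complex.ofReal_re]

lemma re_trace_le_traceNorm {T : Matrix n n ℂ} (hT : T.IsHermitian) :
    (T.trace).re ≤ traceNorm T := by
  rw [traceNorm_hermitian hT]
  conv_lhs => rw [spectral' hT]
  rw [trace_udu _ (star_eU_mul hT)]
  rw [show (∑ i, ((hT.eigenvalues i : ℝ) : ℂ)) = ((∑ i, hT.eigenvalues i : ℝ) : ℂ) by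
    push_cast; ring, Complex.ofReal_re]
  exact Finset.sum_le_sum fun i _ => le_abs_self _


lemma dot_conj (B C : Matrix n n ℂ) (hB : B.IsHermitian) (u v : n → ℂ) :
    star (B *ᵥ u) ⬝ᵥ C *ᵥ (B *ᵥ v) = star u ⬝ᵥ (B * C * B) *ᵥ v := by
  rw [Matrix.star_mulVec, Matrix.mulVec_mulVec, Matrix.dotProduct_mulVec,
    Matrix.vecMul_vecMul, Matrix.dotProduct_mulVec, hB.eq, Matrix.mul_assoc]

lemma mul_eq_zero_of_supp {ρ σ : Matrix n n ℂ} (hsupp : SuppSubset ρ σ) (N : Matrix n n ℂ)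
    (hN : σ * N = 0) : ρ * N = 0 := by
  ext i j
  have h1 : σ *ᵥ (fun k => N k j) = 0 := by
    funext i'
    have h : (σ * N) i' j = 0 := by rw [hN]; simp
    simpa [Matrix.mulVec, dotProduct, Matrix.mul_apply] using h
  have h2 := congrFun (hsupp _ h1) i
  simpa [Matrix.mulVec, dotProduct, Matrix.mul_apply] using h2

lemma sum_normSq_eq_one {U : Matrix n n ℂ} (hUU : U * star U = 1) {u : n → ℂ}
    (hu : star u ⬝ᵥ u = 1) : ∑ i, Complex.normSq ((star U *ᵥ u) i) = 1 := by
  have h2 : U * Matrix.diagonal (fun _ : n => ((1 : ℝ) : ℂ)) * star U = 1 := by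
    have hd : Matrix.diagonal (fun _ : n => ((1 : ℝ) : ℂ)) = (1 : Matrix n n ℂ) := by simp
    rw [hd, Matrix.mul_one, hUU]
  have h1 := quadForm U (fun _ => (1 : ℝ)) u
  rw [h2, Matrix.one_mulVec, hu] at h1
  have h3 := Complex.ofReal_injective h1.symm
  simpa using h3

lemma key {ρ σ : Matrix n n ℂ} (hρ : ρ.PosSemidef) (hσ : σ.PosSemidef)
    (hsupp : SuppSubset ρ σ) {α : ℝ} (hα : 1 < α) (u : n → ℂ)
    (hu : star u ⬝ᵥ u = 1) (hp : 0 < (star u ⬝ᵥ ρ *ᵥ u).re) :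
    0 < (star u ⬝ᵥ σ *ᵥ u).re ∧
      (star u ⬝ᵥ ρ *ᵥ u).re ^ α * (star u ⬝ᵥ σ *ᵥ u).re ^ (1 - α)
        ≤ ((matPow (matPow σ ((1 - α) / (2 * α)) * ρ * matPow σ ((1 - α) / (2 * α))) α).trace).re := by
  have hα0 : (0 : ℝ) < α := by linarith
  set γ : ℝ := (1 - α) / (2 * α) with hγdef
  set s : ℝ := (α - 1) / α with hsdef
  have hs0 : 0 < s := div_pos (by linarith) hα0
  have hs1 : s ≤ 1 := by rw [hsdef, div_le_one hα0]; linarith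
  have hγne : γ ≠ 0 := div_ne_zero (by linarith) (by linarith)
  have hσH := hσ.1
  set U : Matrix n n ℂ := (hσH.eigenvectorUnitary : Matrix n n ℂ) with hU
  set lam := hσH.eigenvalues with hlam
  have hlam0 : ∀ i, 0 ≤ lam i := fun i => hσ.eigenvalues_nonneg i
  set w : n → ℝ := fun i => Complex.normSq ((star U *ᵥ u) i) with hwdef
  have hw0 : ∀ i, 0 ≤ w i := fun i => Complex.normSq_nonneg _
  have hw1 : ∑ i, w i = 1 := sum_normSq_eq_one (eU_mul_star hσH) hu
  have hq : star u ⬝ᵥ σ *ᵥ u = ((∑ i, lam i * w i : ℝ) : ℂ) := by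
    conv_lhs => rw [spectral' hσH]
    exact quadForm U lam u
  set qR := ∑ i, lam i * w i with hqRdef
  have hqre : (star u ⬝ᵥ σ *ᵥ u).re = qR := by rw [hq]; exact Complex.ofReal_re _
  have hqnn : ∀ j ∈ Finset.univ, 0 ≤ lam j * w j :=
    fun j _ => mul_nonneg (hlam0 j) (hw0 j)
  have hq0 : 0 < qR := by
    rcases lt_or_ge 0 qR with h | h
    · exact h
    · exfalso
      have hq0' : qR = 0 := le_antisymm h (by rw [hqRdef]; exact Finset.sum_nonneg hqnn)
      rw [hqRdef] at hq0'
      have hterm := (Finset.sum_eq_zero_iff_of_nonneg hqnn).1 hq0'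
      have hσu : σ *ᵥ u = 0 := by
        conv_lhs => rw [spectral' hσH]
        rw [← Matrix.mulVec_mulVec, ← Matrix.mulVec_mulVec]
        have hdiag : Matrix.diagonal (fun i => ((lam i : ℝ) : ℂ)) *ᵥ (star U *ᵥ u) = 0 := by
          funext i
          rw [Matrix.mulVec_diagonal]
          rcases eq_or_ne ((star U *ᵥ u) i) 0 with h0 | h0
          · rw [h0, mul_zero]; rfl
          · have hl0 : lam i = 0 := by
              by_contra hne
              have hwpos : 0 < w i := by
                rw [hwdef]; exact Complex.normSq_pos.2 h0
              exact (mul_ne_zero hne (ne_of_gt hwpos)) (hterm i (Finset.mem_univ i))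
            simp [hl0]
        rw [hdiag, Matrix.mulVec_zero]
      have hρu := hsupp u hσu
      rw [hρu] at hp
      simp at hp
  have hA : (matPow σ γ).IsHermitian := isHermitian_matPow hσH γ
  set A := matPow σ γ with hAdef
  set B := matPow σ (-γ) with hBdef
  have hBH : B.IsHermitian := isHermitian_matPow hσH (-γ)
  set chi : n → ℝ := fun i => if lam i = 0 then 0 else 1 with hchidef
  set P : Matrix n n ℂ := U * Matrix.diagonal (fun i => ((chi i : ℝ) : ℂ)) * star U with hPdef
  have hmulP : ∀ r : ℝ, r ≠ 0 → matPow σ r * matPow σ (-r) = P := by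
    intro r hr
    rw [matPow_eq hσH, matPow_eq hσH, udu_mul _ (star_eU_mul hσH)]
    have he : (fun i => ((lam i ^ r : ℝ) : ℂ) * ((lam i ^ (-r) : ℝ) : ℂ))
        = fun i => ((chi i : ℝ) : ℂ) := by
      funext i
      rcases eq_or_ne (lam i) 0 with h0 | h0
      · rw [h0, Real.zero_rpow hr, Real.zero_rpow (neg_ne_zero.2 hr)]
        simp [hchidef, h0]
      · have hpos : 0 < lam i := (hlam0 i).lt_of_ne (Ne.symm h0)
        rw [← Complex.ofReal_mul, ← Real.rpow_add hpos, add_neg_cancel, Real.rpow_zero]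
        simp [hchidef, h0]
    rw [he]
  have hAB : A * B = P := hmulP γ hγne
  have hBA : B * A = P := by
    have h := hmulP (-γ) (neg_ne_zero.2 hγne)
    rwa [neg_neg] at h
  have hσP : σ * P = σ := by
    conv_lhs => rw [spectral' hσH, hPdef, udu_mul _ (star_eU_mul hσH)]
    conv_rhs => rw [spectral' hσH]
    have he : (fun i => ((lam i : ℝ) : ℂ) * ((chi i : ℝ) : ℂ)) = fun i => ((lam i : ℝ) : ℂ) := by
      funext i
      rcases eq_or_ne (lam i) 0 with h0 | h0
      · simp [h0]
      · simp [hchidef, h0]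
    rw [he]
  have hρP : ρ * P = ρ := by
    have h0 : σ * (1 - P) = 0 := by rw [Matrix.mul_sub, Matrix.mul_one, hσP, sub_self]
    have h1 := mul_eq_zero_of_supp hsupp _ h0
    rw [Matrix.mul_sub, Matrix.mul_one, sub_eq_zero] at h1
    exact h1.symm
  have hPH : P.IsHermitian := by rw [hPdef]; exact isHermitian_udu U chi
  have hPρ : P * ρ = ρ := by
    have h := congrArg Matrix.conjTranspose hρP
    rwa [Matrix.conjTranspose_mul, hPH.eq, hρ.1.eq] at h
  set M := A * ρ * A with hMdef
  have hMpsd : M.PosSemidef := by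
    have h := hρ.mul_mul_conjTranspose_same A
    rwa [hA.eq] at h
  have hBMB : B * M * B = ρ := by
    have hassoc : B * M * B = (B * A) * ρ * (A * B) := by
      rw [hMdef]; simp only [Matrix.mul_assoc]
    rw [hassoc, hBA, hAB, Matrix.mul_assoc, ← Matrix.mul_assoc, hPρ, hρP]
  have hγs : (-γ) + (-γ) = s := by
    rw [hγdef, hsdef]; field_simp; ring
  have hBB : B * B = matPow σ s := matPow_mul_matPow hσ (fun x hx => by
    rcases hx.eq_or_lt with h0 | h0
    · rw [← h0, Real.zero_rpow (neg_ne_zero.2 hγne), Real.zero_rpow hs0.ne', mul_zero]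
    · rw [← Real.rpow_add h0, hγs])
  set ψ := B *ᵥ u with hψdef
  have hMH := hMpsd.1
  set V : Matrix n n ℂ := (hMH.eigenvectorUnitary : Matrix n n ℂ) with hV
  set m := hMH.eigenvalues with hm
  have hm0 : ∀ i, 0 ≤ m i := fun i => hMpsd.eigenvalues_nonneg i
  set c : n → ℝ := fun i => Complex.normSq ((star V *ᵥ ψ) i) with hcdef
  have hc0 : ∀ i, 0 ≤ c i := fun i => Complex.normSq_nonneg _
  set t := ∑ i, lam i ^ s * w i with htdef
  have hψψ : star ψ ⬝ᵥ ψ = ((t : ℝ) : ℂ) := by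
    have h1 := dot_conj B 1 hBH u u
    rw [Matrix.one_mulVec, Matrix.mul_one] at h1
    rw [hψdef, h1, hBB, matPow_eq hσH]
    exact quadForm U (fun i => lam i ^ s) u
  have hcsum : ∑ i, c i = t := by
    have h2 : V * Matrix.diagonal (fun _ : n => ((1 : ℝ) : ℂ)) * star V = 1 := by
      have hd : Matrix.diagonal (fun _ : n => ((1 : ℝ) : ℂ)) = (1 : Matrix n n ℂ) := by simp
      rw [hd, Matrix.mul_one]; exact eU_mul_star hMH
    have h1 := quadForm V (fun _ => (1 : ℝ)) ψ
    rw [h2, Matrix.one_mulVec, hψψ] at h1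
    have h3 := Complex.ofReal_injective h1
    simpa [hcdef] using h3.symm
  have hMψ : star ψ ⬝ᵥ M *ᵥ ψ = ((∑ i, m i * c i : ℝ) : ℂ) := by
    conv_lhs => rw [spectral' hMH]
    exact quadForm V m ψ
  have hMψ' : star ψ ⬝ᵥ M *ᵥ ψ = star u ⬝ᵥ ρ *ᵥ u := by
    rw [hψdef, dot_conj B M hBH u u, hBMB]
  set p := (star u ⬝ᵥ ρ *ᵥ u).re with hpdef
  have hmc : ∑ i, m i * c i = p := by
    rw [hpdef, ← hMψ', hMψ, Complex.ofReal_re]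
  set Q := ((matPow M α).trace).re with hQdef
  have hQ : Q = ∑ i, m i ^ α := by
    rw [hQdef, matPow_eq hMH α, trace_udu _ (star_eU_mul hMH),
      show (∑ i, ((m i ^ α : ℝ) : ℂ)) = ((∑ i, m i ^ α : ℝ) : ℂ) by push_cast; ring,
      Complex.ofReal_re]
  have htnn : ∀ j ∈ Finset.univ, 0 ≤ lam j ^ s * w j :=
    fun j _ => mul_nonneg (Real.rpow_nonneg (hlam0 j) s) (hw0 j)
  have ht0 : 0 < t := by
    rcases lt_or_ge 0 t with h | h
    · exact h
    · exfalso
      have ht00 : t = 0 := le_antisymm h (by rw [htdef]; exact Finset.sum_nonneg htnn)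
      rw [htdef] at ht00
      have hterm := (Finset.sum_eq_zero_iff_of_nonneg htnn).1 ht00
      have : qR = 0 := by
        rw [hqRdef]
        refine Finset.sum_eq_zero fun i _ => ?_
        rcases eq_or_ne (lam i) 0 with h0 | h0
        · rw [h0, zero_mul]
        · have hsp : 0 < lam i ^ s :=
            Real.rpow_pos_of_pos ((hlam0 i).lt_of_ne (Ne.symm h0)) s
          have h' := hterm i (Finset.mem_univ i)
          rcases mul_eq_zero.1 h' with h'' | h''
          · exact absurd h'' hsp.ne'
          · rw [h'', mul_zero]
      exact hq0.ne' this
  have htq : t ≤ qR ^ s := by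
    have h := Real.arith_mean_le_rpow_mean Finset.univ w (fun i => lam i ^ s)
      (fun i _ => hw0 i) hw1 (fun i _ => Real.rpow_nonneg (hlam0 i) s)
      (p := 1 / s) ((one_le_div hs0).2 hs1)
    have he1 : ∀ i, (lam i ^ s) ^ (1 / s : ℝ) = lam i := fun i => by
      rw [← Real.rpow_mul (hlam0 i), mul_one_div_cancel hs0.ne', Real.rpow_one]
    calc t = ∑ i, w i * lam i ^ s := by
            rw [htdef]; exact Finset.sum_congr rfl fun i _ => mul_comm _ _
      _ ≤ (∑ i, w i * (lam i ^ s) ^ (1 / s : ℝ)) ^ (1 / (1 / s) : ℝ) := h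
      _ = qR ^ s := by
            rw [one_div_one_div, hqRdef]
            congr 1
            exact Finset.sum_congr rfl fun i _ => by rw [he1 i, mul_comm]
  have hppos : 0 < p := hp
  have step1 : (p / t) ^ α ≤ ∑ i, (c i / t) * m i ^ α := by
    have hwsum : ∑ i, c i / t = 1 := by
      rw [← Finset.sum_div, hcsum, div_self ht0.ne']
    have h := Real.rpow_arith_mean_le_arith_mean_rpow Finset.univ (fun i => c i / t) m
      (fun i _ => div_nonneg (hc0 i) ht0.le) hwsum (fun i _ => hm0 i) hα.le
    have hsum : ∑ i, (c i / t) * m i = p / t := by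
      rw [← hmc, Finset.sum_div]
      exact Finset.sum_congr rfl fun i _ => by ring
    calc (p / t) ^ α = (∑ i, (c i / t) * m i) ^ α := by rw [hsum]
      _ ≤ ∑ i, (c i / t) * m i ^ α := h
  have step2 : ∑ i, (c i / t) * m i ^ α ≤ Q := by
    rw [hQ]
    refine Finset.sum_le_sum fun i _ => ?_
    have hci : c i / t ≤ 1 := by
      rw [div_le_one ht0]
      rw [← hcsum]
      exact Finset.single_le_sum (fun j _ => hc0 j) (Finset.mem_univ i)
    exact mul_le_of_le_one_left (Real.rpow_nonneg (hm0 i) α) hci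
  have step3 : p ^ α * qR ^ (1 - α) ≤ (p / t) ^ α := by
    rw [Real.div_rpow hppos.le ht0.le, div_eq_mul_inv]
    have h1 : t ^ α ≤ qR ^ (α - 1) := by
      have h2 : (qR ^ s) ^ α = qR ^ (α - 1) := by
        rw [← Real.rpow_mul hq0.le]
        congr 1
        rw [hsdef]; field_simp
      calc t ^ α ≤ (qR ^ s) ^ α := Real.rpow_le_rpow ht0.le htq hα0.le
        _ = qR ^ (α - 1) := h2
    have h3 : qR ^ (1 - α) = (qR ^ (α - 1))⁻¹ := by
      rw [← Real.rpow_neg hq0.le]; congr 1; ring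
    rw [h3]
    refine mul_le_mul_of_nonneg_left ?_ (Real.rpow_nonneg hppos.le α)
    exact inv_anti₀ (Real.rpow_pos_of_pos ht0 α) h1
  constructor
  · rw [hqre]; exact hq0
  · rw [hqre]
    calc p ^ α * qR ^ (1 - α) ≤ (p / t) ^ α := step3
      _ ≤ ∑ i, (c i / t) * m i ^ α := step1
      _ ≤ Q := step2

lemma sandRenyi_ge {ρ σ : Matrix n n ℂ} (hρ : ρ.PosSemidef) (hσ : σ.PosSemidef)
    {α : ℝ} (hα : 1 < α) (hss : SuppSubset ρ σ) (u : n → ℂ)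
    (hu : star u ⬝ᵥ u = 1) (hp : 0 < (star u ⬝ᵥ ρ *ᵥ u).re) :
    0 < (star u ⬝ᵥ σ *ᵥ u).re ∧
      ((α / (α - 1) * Real.logb 2 ((star u ⬝ᵥ ρ *ᵥ u).re)
        - Real.logb 2 ((star u ⬝ᵥ σ *ᵥ u).re) : ℝ) : EReal) ≤ sandRenyi α ρ σ := by
  obtain ⟨hq0, hQle⟩ := key hρ hσ hss hα u hu hp
  set p := (star u ⬝ᵥ ρ *ᵥ u).re with hpdef
  set q := (star u ⬝ᵥ σ *ᵥ u).re with hqdef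
  set Q := ((matPow (matPow σ ((1 - α) / (2 * α)) * ρ *
    matPow σ ((1 - α) / (2 * α))) α).trace).re with hQdef
  refine ⟨hq0, ?_⟩
  have hpq : (0 : ℝ) < p ^ α * q ^ (1 - α) :=
    mul_pos (Real.rpow_pos_of_pos hp α) (Real.rpow_pos_of_pos hq0 _)
  have hQ0 : 0 < Q := lt_of_lt_of_le hpq hQle
  rw [sandRenyi, if_pos (Or.inr ⟨hα, hss⟩), elog2, if_neg (not_le.2 hQ0),
    ← EReal.coe_mul, EReal.coe_le_coe_iff]
  have hA1 : (0 : ℝ) < α - 1 := by linarith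
  have hlogQ : Real.logb 2 (p ^ α * q ^ (1 - α)) ≤ Real.logb 2 Q :=
    Real.logb_le_logb_of_le (by norm_num) hpq hQle
  have hexp : Real.logb 2 (p ^ α * q ^ (1 - α))
      = α * Real.logb 2 p + (1 - α) * Real.logb 2 q := by
    unfold Real.logb
    rw [Real.log_mul (Real.rpow_pos_of_pos hp α).ne' (Real.rpow_pos_of_pos hq0 _).ne',
      Real.log_rpow hp, Real.log_rpow hq0]
    ring
  rw [hexp] at hlogQ
  have hmul := mul_le_mul_of_nonneg_left hlogQ (le_of_lt (inv_pos.2 hA1))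
  calc α / (α - 1) * Real.logb 2 p - Real.logb 2 q
      = (α - 1)⁻¹ * (α * Real.logb 2 p + (1 - α) * Real.logb 2 q) := by
        field_simp
        ring
    _ ≤ (α - 1)⁻¹ * Real.logb 2 Q := hmul

lemma qform_le_trace {σ : Matrix n n ℂ} (hσ : σ.PosSemidef) (u : n → ℂ)
    (hu : star u ⬝ᵥ u = 1) : (star u ⬝ᵥ σ *ᵥ u).re ≤ (σ.trace).re := by
  have hσH := hσ.1
  have hq := quadForm (hσH.eigenvectorUnitary : Matrix n n ℂ) hσH.eigenvalues u
  rw [← spectral' hσH] at hq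
  rw [hq, Complex.ofReal_re]
  conv_rhs => rw [spectral' hσH]
  rw [trace_udu _ (star_eU_mul hσH),
    show (∑ i, ((hσH.eigenvalues i : ℝ) : ℂ)) = ((∑ i, hσH.eigenvalues i : ℝ) : ℂ) by
      push_cast; ring,
    Complex.ofReal_re]
  have hw1 := sum_normSq_eq_one (eU_mul_star hσH) hu
  refine Finset.sum_le_sum fun i _ => ?_
  have hle1 : Complex.normSq ((star (hσH.eigenvectorUnitary : Matrix n n ℂ) *ᵥ u) i) ≤ 1 := by
    rw [← hw1]
    exact Finset.single_le_sum (fun j _ => Complex.normSq_nonneg _) (Finset.mem_univ i)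
  have h2 := mul_le_mul_of_nonneg_left hle1 (hσ.eigenvalues_nonneg i)
  simpa using h2

lemma col_normSq_sum {A : Matrix n n ℂ} (hA : A.IsHermitian) (i : n) :
    ∑ p, Complex.normSq ((hA.eigenvectorUnitary : Matrix n n ℂ) p i) = 1 := by
  set U := (hA.eigenvectorUnitary : Matrix n n ℂ) with hU
  have h : (star U * U) i i = (1 : Matrix n n ℂ) i i := by rw [star_eU_mul hA]
  rw [Matrix.mul_apply, Matrix.one_apply_eq] at h
  have h2 : ((∑ p, Complex.normSq (U p i) : ℝ) : ℂ) = ((1 : ℝ) : ℂ) := by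
    push_cast
    rw [← h]
    refine Finset.sum_congr rfl fun p _ => ?_
    rw [Matrix.star_apply, Complex.star_def, mul_comm, Complex.mul_conj]
  exact_mod_cast h2

lemma exists_good_vector [Nonempty n] {ρ : Matrix n n ℂ} (hρ : ρ.PosSemidef)
    (htr : ρ.trace = 1) :
    ∃ u : n → ℂ, star u ⬝ᵥ u = 1 ∧ ((Fintype.card n : ℝ))⁻¹ ≤ (star u ⬝ᵥ ρ *ᵥ u).re := by
  have hH := hρ.1
  set U := (hH.eigenvectorUnitary : Matrix n n ℂ) with hU
  set lam := hH.eigenvalues with hlam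
  have hsum : ∑ i, lam i = 1 := by
    have h2 : ρ.trace = ((∑ i, lam i : ℝ) : ℂ) := by
      conv_lhs => rw [spectral' hH]
      rw [trace_udu _ (star_eU_mul hH)]
      push_cast; ring
    rw [htr] at h2
    exact_mod_cast h2.symm
  obtain ⟨j, -, hj⟩ := Finset.exists_max_image Finset.univ lam
    ⟨Classical.arbitrary n, Finset.mem_univ _⟩
  refine ⟨fun k => U k j, ?_, ?_⟩
  · have h1 : star (fun k => U k j) ⬝ᵥ (fun k => U k j)
        = ((∑ k, Complex.normSq (U k j) : ℝ) : ℂ) := by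
      push_cast
      simp only [dotProduct, Pi.star_apply]
      refine Finset.sum_congr rfl fun k _ => ?_
      rw [Complex.star_def, mul_comm, Complex.mul_conj]
    rw [h1, col_normSq_sum hH j]
    norm_num
  · have hq := quadForm U lam (fun k => U k j)
    rw [← spectral' hH] at hq
    have hUu : (star U *ᵥ fun k => U k j) = fun i => (1 : Matrix n n ℂ) i j := by
      funext i
      have : (star U *ᵥ fun k => U k j) i = (star U * U) i j := by
        rw [Matrix.mul_apply]; rfl
      rw [this, star_eU_mul hH]
    rw [hUu] at hq
    rw [hq, Complex.ofReal_re]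
    have hsum2 : ∑ i, lam i * Complex.normSq ((1 : Matrix n n ℂ) i j) = lam j := by
      have hterm : ∀ i, lam i * Complex.normSq ((1 : Matrix n n ℂ) i j)
          = if i = j then lam i else 0 := fun i => by
        by_cases h : i = j <;> simp [Matrix.one_apply, h]
      rw [Finset.sum_congr rfl fun i _ => hterm i, Finset.sum_ite_eq' Finset.univ j lam]
      simp
    rw [hsum2]
    have hcard0 : (0 : ℝ) < (Fintype.card n : ℝ) := by
      exact_mod_cast Fintype.card_pos
    have hcard : (1 : ℝ) ≤ (Fintype.card n : ℝ) * lam j := by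
      calc (1 : ℝ) = ∑ i, lam i := hsum.symm
        _ ≤ ∑ _i : n, lam j := Finset.sum_le_sum fun i _ => hj i (Finset.mem_univ i)
        _ = (Fintype.card n : ℝ) * lam j := by
            rw [Finset.sum_const, nsmul_eq_mul, Finset.card_univ]
    rw [inv_eq_one_div, div_le_iff₀ hcard0]
    linarith

lemma ptrans_isHermitian {a b : Type} {σ : Matrix (a × b) (a × b) ℂ}
    (h : σ.IsHermitian) : (ptrans σ).IsHermitian := by
  have h' : ∀ p q, star (σ p q) = σ q p := fun p q => by
    have h2 := congrFun (congrFun h.eq q) p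
    rw [Matrix.conjTranspose_apply] at h2
    exact h2
  show (ptrans σ)ᴴ = ptrans σ
  ext p q
  rw [Matrix.conjTranspose_apply]
  show star (σ (q.1, p.2) (p.1, q.2)) = σ (p.1, q.2) (q.1, p.2)
  exact h' _ _

lemma trace_ptrans {a b : Type} [Fintype a] [Fintype b]
    (σ : Matrix (a × b) (a × b) ℂ) : (ptrans σ).trace = σ.trace := rfl

lemma swap_sum_le_traceNorm {d : ℕ} {T : Matrix (Fin d × Fin d) (Fin d × Fin d) ℂ}
    (hT : T.IsHermitian) :
    (∑ p : Fin d × Fin d, T p (p.2, p.1)).re ≤ traceNorm T := by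
  rw [traceNorm_hermitian hT]
  set U := (hT.eigenvectorUnitary : Matrix (Fin d × Fin d) (Fin d × Fin d) ℂ) with hUdef
  set lam := hT.eigenvalues with hlamdef
  have hentry : ∀ p q, T p q = ∑ x, ((lam x : ℝ) : ℂ) * (U p x * (starRingEnd ℂ) (U q x)) := by
    intro p q
    conv_lhs => rw [spectral' hT]
    rw [Matrix.mul_apply]
    refine Finset.sum_congr rfl fun x _ => ?_
    rw [Matrix.mul_diagonal, Matrix.star_apply, Complex.star_def]
    ring
  have hswap : (∑ p : Fin d × Fin d, T p (p.2, p.1))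
      = ∑ x, ((lam x : ℝ) : ℂ) * ∑ p : Fin d × Fin d, U p x * (starRingEnd ℂ) (U (p.2, p.1) x) := by
    rw [Finset.sum_congr rfl fun p _ => hentry p (p.2, p.1), Finset.sum_comm]
    exact Finset.sum_congr rfl fun x _ => (Finset.mul_sum _ _ _).symm
  rw [hswap, Complex.re_sum]
  refine Finset.sum_le_sum fun i _ => ?_
  set z := ∑ p : Fin d × Fin d, U p i * (starRingEnd ℂ) (U (p.2, p.1) i) with hz
  rw [Complex.re_ofReal_mul]
  have hzre : |z.re| ≤ 1 := by
    have hb : ∀ p : Fin d × Fin d, |(U p i * (starRingEnd ℂ) (U (p.2, p.1) i)).re|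
        ≤ (Complex.normSq (U p i) + Complex.normSq (U (p.2, p.1) i)) / 2 := by
      intro p
      have h1 : 0 ≤ Complex.normSq (U p i - U (p.2, p.1) i) := Complex.normSq_nonneg _
      have h2 : 0 ≤ Complex.normSq (U p i + U (p.2, p.1) i) := Complex.normSq_nonneg _
      rw [Complex.normSq_sub] at h1
      rw [Complex.normSq_add] at h2
      rw [abs_le]
      constructor <;> nlinarith [h1, h2]
    have hre : ∑ p : Fin d × Fin d, Complex.normSq (U (p.2, p.1) i)
        = ∑ p : Fin d × Fin d, Complex.normSq (U p i) :=
      Fintype.sum_equiv (Equiv.prodComm (Fin d) (Fin d)) _ _ (fun p => rfl)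
    calc |z.re| = |∑ p : Fin d × Fin d, (U p i * (starRingEnd ℂ) (U (p.2, p.1) i)).re| := by
          rw [hz, Complex.re_sum]
      _ ≤ ∑ p : Fin d × Fin d, |(U p i * (starRingEnd ℂ) (U (p.2, p.1) i)).re| :=
          Finset.abs_sum_le_sum_abs _ _
      _ ≤ ∑ p : Fin d × Fin d, (Complex.normSq (U p i) + Complex.normSq (U (p.2, p.1) i)) / 2 :=
          Finset.sum_le_sum fun p _ => hb p
      _ = 1 := by
          rw [← Finset.sum_div, Finset.sum_add_distrib, hre, col_normSq_sum hT i]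
          norm_num
  calc lam i * z.re ≤ |lam i * z.re| := le_abs_self _
    _ = |lam i| * |z.re| := abs_mul _ _
    _ ≤ |lam i| * 1 := mul_le_mul_of_nonneg_left hzre (abs_nonneg _)
    _ = |lam i| := mul_one _

noncomputable def phi (d : ℕ) : (Fin d × Fin d) → ℂ :=
  fun p => if p.1 = p.2 then (((Real.sqrt d)⁻¹ : ℝ) : ℂ) else 0

lemma phi_dot {d : ℕ} (hd : 1 ≤ d) : star (phi d) ⬝ᵥ phi d = 1 := by
  have hd0' : (d : ℝ) ≠ 0 := Nat.cast_ne_zero.2 (by omega)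
  have hterm : ∀ p : Fin d × Fin d, star (phi d p) * phi d p
      = if p.1 = p.2 then (((d : ℝ))⁻¹ : ℂ) else 0 := by
    intro p
    by_cases h : p.1 = p.2
    · simp only [phi, if_pos h]
      rw [Complex.star_def, Complex.conj_ofReal, ← Complex.ofReal_mul, ← mul_inv,
        Real.mul_self_sqrt (Nat.cast_nonneg d)]
      push_cast
      ring
    · simp [phi, h]
  rw [dotProduct]
  simp only [Pi.star_apply]
  rw [Finset.sum_congr rfl fun p _ => hterm p, Fintype.sum_prod_type]
  simp only [Finset.sum_ite_eq, Finset.mem_univ, if_true]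
  rw [Finset.sum_const, Finset.card_univ, Fintype.card_fin, nsmul_eq_mul]
  rw [show ((d : ℕ) : ℂ) = (((d : ℝ)) : ℂ) by push_cast; ring, ← Complex.ofReal_inv,
    ← Complex.ofReal_mul, mul_inv_cancel₀ hd0']
  exact Complex.ofReal_one

lemma maxEnt_eq (d : ℕ) : maxEnt d = Matrix.vecMulVec (phi d) (star (phi d)) := by
  ext p q
  simp only [maxEnt, Matrix.of_apply, Matrix.vecMulVec_apply, phi, Pi.star_apply]
  by_cases h1 : p.1 = p.2 <;> by_cases h2 : q.1 = q.2 <;>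
    simp only [h1, h2, if_true, if_false, and_self, and_true, and_false, false_and, true_and,
      star_zero, mul_zero, zero_mul]
  rw [Complex.star_def, Complex.conj_ofReal, ← Complex.ofReal_mul, ← mul_inv,
    Real.mul_self_sqrt (Nat.cast_nonneg d)]
  push_cast
  ring

lemma vmv_mul_vmv (a b c e : n → ℂ) :
    Matrix.vecMulVec a b * Matrix.vecMulVec c e = (b ⬝ᵥ c) • Matrix.vecMulVec a e := by
  ext i j
  simp only [Matrix.mul_apply, Matrix.vecMulVec_apply, Matrix.smul_apply, dotProduct,
    smul_eq_mul, Finset.sum_mul]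
  exact Finset.sum_congr rfl fun k _ => by ring

lemma mul_vmv (M : Matrix n n ℂ) (a b : n → ℂ) :
    M * Matrix.vecMulVec a b = Matrix.vecMulVec (M *ᵥ a) b := by
  ext i j
  simp only [Matrix.mul_apply, Matrix.vecMulVec_apply, Matrix.mulVec, dotProduct,
    Finset.sum_mul]
  exact Finset.sum_congr rfl fun k _ => by ring

lemma vmv_mul (a b : n → ℂ) (M : Matrix n n ℂ) :
    Matrix.vecMulVec a b * M = Matrix.vecMulVec a (b ᵥ* M) := by
  ext i j
  simp only [Matrix.mul_apply, Matrix.vecMulVec_apply, Matrix.vecMul, dotProduct,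
    Finset.mul_sum]
  exact Finset.sum_congr rfl fun k _ => by ring

lemma vecMulVec_star_posSemidef (v : n → ℂ) : (Matrix.vecMulVec v (star v)).PosSemidef := by
  refine Matrix.PosSemidef.of_dotProduct_mulVec_nonneg ?_ ?_
  · show _ᴴ = _
    ext i j
    simp only [Matrix.conjTranspose_apply, Matrix.vecMulVec_apply, Pi.star_apply]
    rw [StarMul.star_mul, star_star]
  · intro x
    have hform : star x ⬝ᵥ (Matrix.vecMulVec v (star v)) *ᵥ x
        = (star x ⬝ᵥ v) * (star v ⬝ᵥ x) := by
      simp only [dotProduct, Matrix.mulVec, Matrix.vecMulVec_apply, Pi.star_apply,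
        Finset.sum_mul]
      refine Finset.sum_congr rfl fun i _ => ?_
      rw [Finset.mul_sum, Finset.mul_sum]
      exact Finset.sum_congr rfl fun j _ => by ring
    rw [hform]
    have hsd : star v ⬝ᵥ x = star (star x ⬝ᵥ v) := by
      rw [Matrix.star_dotProduct]
    rw [hsd, Complex.star_def, Complex.mul_conj, Complex.zero_le_real]
    exact Complex.normSq_nonneg _

lemma posSemidef_real_smul {M : Matrix n n ℂ} (hM : M.PosSemidef) {c : ℝ} (hc : 0 ≤ c) :
    (((c : ℂ)) • M).PosSemidef := by
  refine Matrix.PosSemidef.of_dotProduct_mulVec_nonneg ?_ ?_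
  · show _ᴴ = _
    rw [Matrix.conjTranspose_smul, hM.1.eq]
    congr 1
    simp
  · intro x
    rw [Matrix.smul_mulVec, dotProduct_smul, smul_eq_mul]
    exact mul_nonneg (Complex.zero_le_real.2 hc) (hM.dotProduct_mulVec_nonneg x)

lemma matPow_one {A : Matrix n n ℂ} (hA : A.IsHermitian) : matPow A 1 = A := by
  rw [matPow_eq hA 1]
  simpa using (spectral' hA).symm

lemma sqrt_mul_sqrt {A : Matrix n n ℂ} (hA : A.PosSemidef) :
    matPow A 2⁻¹ * matPow A 2⁻¹ = A := by
  rw [matPow_mul_matPow hA (fun x hx => ?_), matPow_one hA.1]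
  rcases eq_or_lt_of_le hx with h0 | h0
  · simp [← h0, Real.zero_rpow, Real.rpow_natCast]
  · rw [← Real.rpow_add h0]; norm_num

lemma maxEnt_trace {d : ℕ} (hd : 1 ≤ d) : (maxEnt d).trace = 1 := by
  have hd0 : (d : ℂ) ≠ 0 := Nat.cast_ne_zero.2 (by omega)
  rw [Matrix.trace, Fintype.sum_prod_type]
  simp only [Matrix.diag_apply, maxEnt, Matrix.of_apply, and_self]
  simp only [Finset.sum_ite_eq, Finset.mem_univ, if_true]
  rw [Finset.sum_const, Finset.card_univ, Fintype.card_fin, nsmul_eq_mul,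
    mul_inv_cancel₀ hd0]

lemma maxEnt_posSemidef (d : ℕ) : (maxEnt d).PosSemidef := by
  rw [maxEnt_eq]
  exact vecMulVec_star_posSemidef _

lemma fidelity_maxEnt {d : ℕ} (hd : 1 ≤ d) {ρ : Matrix (Fin d × Fin d) (Fin d × Fin d) ℂ}
    (hρ : ρ.PosSemidef) :
    fidelity ρ (maxEnt d) = (star (phi d) ⬝ᵥ ρ *ᵥ (phi d)).re := by
  set p := (star (phi d) ⬝ᵥ ρ *ᵥ (phi d)).re with hpdef
  have hMpsd := maxEnt_posSemidef d
  have hMsq : maxEnt d * maxEnt d = maxEnt d := by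
    rw [maxEnt_eq, vmv_mul_vmv, phi_dot hd, one_smul]
  have h1 : matPow (maxEnt d) 2⁻¹ = maxEnt d := sqrtUnique hMpsd hMpsd hMsq
  have hpC : star (phi d) ⬝ᵥ ρ *ᵥ (phi d) = ((p : ℝ) : ℂ) := by
    have him := (Complex.le_def.1 (hρ.dotProduct_mulVec_nonneg (phi d))).2
    apply Complex.ext
    · rw [Complex.ofReal_re]
    · rw [Complex.ofReal_im]; exact him.symm ▸ rfl
  have hp0 : 0 ≤ p := (Complex.le_def.1 (hρ.dotProduct_mulVec_nonneg (phi d))).1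
  set X := matPow ρ 2⁻¹ * maxEnt d with hX
  have hXX : Xᴴ * X = ((p : ℝ) : ℂ) • maxEnt d := by
    rw [hX, Matrix.conjTranspose_mul, hMpsd.1.eq, (isHermitian_matPow hρ.1 2⁻¹).eq]
    have hassoc : maxEnt d * matPow ρ 2⁻¹ * (matPow ρ 2⁻¹ * maxEnt d)
        = maxEnt d * (matPow ρ 2⁻¹ * matPow ρ 2⁻¹) * maxEnt d := by
      simp only [Matrix.mul_assoc]
    rw [hassoc, sqrt_mul_sqrt hρ]
    conv_lhs => rw [maxEnt_eq d, vmv_mul (phi d) (star (phi d)) ρ, vmv_mul_vmv]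
    rw [← Matrix.dotProduct_mulVec, hpC, ← maxEnt_eq d]
  have hC : matPow (Xᴴ * X) 2⁻¹ = ((Real.sqrt p : ℝ) : ℂ) • maxEnt d := by
    have hsq : (((Real.sqrt p : ℝ) : ℂ) • maxEnt d) * (((Real.sqrt p : ℝ) : ℂ) • maxEnt d)
        = ((p : ℝ) : ℂ) • maxEnt d := by
      rw [smul_mul_smul_comm, hMsq, ← Complex.ofReal_mul, Real.mul_self_sqrt hp0]
    exact sqrtUnique (Matrix.posSemidef_conjTranspose_mul_self X)
      (posSemidef_real_smul hMpsd (Real.sqrt_nonneg p)) (hsq.trans hXX.symm)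
  have hfid : fidelity ρ (maxEnt d) = (traceNorm X) ^ 2 := by
    rw [fidelity, h1, hX]
  rw [hfid, traceNorm, hC, Matrix.trace_smul, maxEnt_trace hd, smul_eq_mul, mul_one,
    Complex.ofReal_re]
  exact Real.sq_sqrt hp0

lemma phi_qform_le {d : ℕ} (hd : 1 ≤ d) {σ : Matrix (Fin d × Fin d) (Fin d × Fin d) ℂ}
    (hσ : PPTprime σ) : (star (phi d) ⬝ᵥ σ *ᵥ (phi d)).re ≤ ((d : ℝ))⁻¹ := by
  have hin : ∀ p, (σ *ᵥ phi d) p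
      = (∑ j : Fin d, σ p (j, j)) * (((Real.sqrt d)⁻¹ : ℝ) : ℂ) := by
    intro p
    rw [Matrix.mulVec, dotProduct, Fintype.sum_prod_type, Finset.sum_mul]
    refine Finset.sum_congr rfl fun j _ => ?_
    simp [phi, mul_ite, Finset.sum_ite_eq]
  have hform : star (phi d) ⬝ᵥ σ *ᵥ (phi d)
      = ((((d : ℝ))⁻¹ : ℝ) : ℂ) * ∑ i : Fin d, ∑ j : Fin d, σ (i, i) (j, j) := by
    simp only [dotProduct, Pi.star_apply]
    rw [Finset.sum_congr rfl (fun p _ => by rw [hin p]), Fintype.sum_prod_type]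
    have hstep : ∀ i : Fin d, (∑ k : Fin d, star (phi d (i, k))
        * ((∑ j : Fin d, σ (i, k) (j, j)) * (((Real.sqrt d)⁻¹ : ℝ) : ℂ)))
        = ((((d : ℝ))⁻¹ : ℝ) : ℂ) * ∑ j : Fin d, σ (i, i) (j, j) := by
      intro i
      have hterm : ∀ k : Fin d, star (phi d (i, k))
          * ((∑ j : Fin d, σ (i, k) (j, j)) * (((Real.sqrt d)⁻¹ : ℝ) : ℂ))
          = if i = k then (((Real.sqrt d)⁻¹ : ℝ) : ℂ)
              * ((∑ j : Fin d, σ (i, k) (j, j)) * (((Real.sqrt d)⁻¹ : ℝ) : ℂ)) else 0 := by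
        intro k
        by_cases h : i = k <;> simp [phi, h, Complex.conj_ofReal]
      rw [Finset.sum_congr rfl fun k _ => hterm k]
      simp only [Finset.sum_ite_eq, Finset.mem_univ, if_true]
      rw [show (((Real.sqrt d)⁻¹ : ℝ) : ℂ)
            * ((∑ j : Fin d, σ (i, i) (j, j)) * (((Real.sqrt d)⁻¹ : ℝ) : ℂ))
          = ((((Real.sqrt d)⁻¹ : ℝ) : ℂ) * (((Real.sqrt d)⁻¹ : ℝ) : ℂ))
            * ∑ j : Fin d, σ (i, i) (j, j) by ring,
        ← Complex.ofReal_mul, ← mul_inv, Real.mul_self_sqrt (Nat.cast_nonneg d)]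
    rw [Finset.sum_congr rfl fun i _ => hstep i, ← Finset.mul_sum]
  rw [hform, Complex.re_ofReal_mul]
  have hS : (∑ i : Fin d, ∑ j : Fin d, σ (i, i) (j, j))
      = ∑ p : Fin d × Fin d, (ptrans σ) p (p.2, p.1) := by
    rw [Fintype.sum_prod_type]; rfl
  have hle : (∑ i : Fin d, ∑ j : Fin d, σ (i, i) (j, j)).re ≤ 1 := by
    rw [hS]
    exact le_trans (swap_sum_le_traceNorm (ptrans_isHermitian hσ.1.1)) hσ.2
  have hd0 : (0 : ℝ) ≤ ((d : ℝ))⁻¹ := by positivity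
  calc ((d : ℝ))⁻¹ * (∑ i : Fin d, ∑ j : Fin d, σ (i, i) (j, j)).re
      ≤ ((d : ℝ))⁻¹ * 1 := mul_le_mul_of_nonneg_left hle hd0
    _ = ((d : ℝ))⁻¹ := mul_one _

/-- Rains relative entropy of approximate e-bits, sandwiched Rényi
version: if `ε ∈ [0,1]`, `Φ̃^d` is a state with `F(Φ̃^d, Φ^d) ≥ 1 - ε`, then for all
`α > 1`, `log₂ d ≤ R̃_α(Φ̃^d) + (α/(α-1)) log₂(1/(1-ε))`
(with `log₂(1/(1-ε)) = -log₂(1-ε) = +∞` when `ε = 1`). -/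
theorem approx_ebits_sandRains {d : ℕ} (hd : 1 ≤ d) (ε : ℝ) (hε : 0 ≤ ε) (hε1 : ε ≤ 1)
    (Φt : Matrix (Fin d × Fin d) (Fin d × Fin d) ℂ) (hΦt : IsState Φt)
    (hF : 1 - ε ≤ fidelity Φt (maxEnt d)) :
    ∀ α : ℝ, 1 < α →
      ((Real.logb 2 d : ℝ) : EReal) ≤
        sandRains α Φt + ((α / (α - 1) : ℝ) : EReal) * (-(elog2 (1 - ε))) := by
  intro α hα
  have hαpos : 0 < α / (α - 1) := div_pos (by linarith) (by linarith)
  obtain ⟨hpsd, htr⟩ := hΦt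
  rcases lt_or_eq_of_le hε1 with hlt | heq
  · -- ε < 1
    have hF' : 1 - ε ≤ (star (phi d) ⬝ᵥ Φt *ᵥ (phi d)).re := by
      rwa [fidelity_maxEnt hd hpsd] at hF
    have hp0 : 0 < (star (phi d) ⬝ᵥ Φt *ᵥ (phi d)).re := lt_of_lt_of_le (by linarith) hF'
    have helog : elog2 (1 - ε) = ((Real.logb 2 (1 - ε) : ℝ) : EReal) := by
      rw [elog2, if_neg (not_le.2 (by linarith : (0 : ℝ) < 1 - ε))]
    set cR : ℝ := α / (α - 1) * (- Real.logb 2 (1 - ε)) with hcR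
    have hc : ((α / (α - 1) : ℝ) : EReal) * (-(elog2 (1 - ε))) = ((cR : ℝ) : EReal) := by
      rw [helog, ← EReal.coe_neg, ← EReal.coe_mul]
    rw [hc]
    have hper : ∀ σ : {σ : Matrix (Fin d × Fin d) (Fin d × Fin d) ℂ // PPTprime σ},
        ((Real.logb 2 d - cR : ℝ) : EReal) ≤ sandRenyi α Φt σ.1 := by
      rintro ⟨σ, hσ⟩
      by_cases hss : SuppSubset Φt σ
      · obtain ⟨hq0, hge⟩ := sandRenyi_ge hpsd hσ.1 hα hss (phi d) (phi_dot hd) hp0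
        refine le_trans ?_ hge
        rw [EReal.coe_le_coe_iff]
        have hqle : (star (phi d) ⬝ᵥ σ *ᵥ (phi d)).re ≤ ((d : ℝ))⁻¹ := phi_qform_le hd hσ
        have hlogq : Real.logb 2 ((star (phi d) ⬝ᵥ σ *ᵥ (phi d)).re) ≤ - Real.logb 2 d := by
          rw [← Real.logb_inv]
          exact Real.logb_le_logb_of_le (by norm_num) hq0 hqle
        have hlogp : Real.logb 2 (1 - ε) ≤ Real.logb 2 ((star (phi d) ⬝ᵥ Φt *ᵥ (phi d)).re) :=
          Real.logb_le_logb_of_le (by norm_num) (by linarith) hF'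
        have hmono := mul_le_mul_of_nonneg_left hlogp hαpos.le
        rw [hcR, mul_neg]
        linarith
      · rw [sandRenyi, if_neg ?_]
        · exact le_top
        · rintro (⟨-, h2⟩ | ⟨-, h2⟩)
          · linarith
          · exact hss h2
    have hinf : ((Real.logb 2 d - cR : ℝ) : EReal) ≤ sandRains α Φt := le_iInf hper
    calc ((Real.logb 2 d : ℝ) : EReal)
        = ((Real.logb 2 d - cR : ℝ) : EReal) + ((cR : ℝ) : EReal) := by
          rw [← EReal.coe_add]
          congr 1
          ring
      _ ≤ sandRains α Φt + ((cR : ℝ) : EReal) := add_le_add_left hinf _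
  · -- ε = 1
    subst heq
    have h0 : elog2 (1 - 1) = ⊥ := by rw [elog2, if_pos (by norm_num)]
    rw [h0, EReal.neg_bot, EReal.coe_mul_top_of_pos hαpos]
    haveI : Nonempty (Fin d × Fin d) := ⟨(⟨0, by omega⟩, ⟨0, by omega⟩)⟩
    have hcard : (0 : ℝ) < (Fintype.card (Fin d × Fin d) : ℝ) := by
      exact_mod_cast Fintype.card_pos
    set K : ℝ := α / (α - 1) * Real.logb 2 ((Fintype.card (Fin d × Fin d) : ℝ))⁻¹ with hK
    have hper : ∀ σ : {σ : Matrix (Fin d × Fin d) (Fin d × Fin d) ℂ // PPTprime σ},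
        ((K : ℝ) : EReal) ≤ sandRenyi α Φt σ.1 := by
      rintro ⟨σ, hσ⟩
      by_cases hss : SuppSubset Φt σ
      · obtain ⟨u, hu, hpu⟩ := exists_good_vector hpsd htr
        have hp0 : 0 < (star u ⬝ᵥ Φt *ᵥ u).re :=
          lt_of_lt_of_le (inv_pos.2 hcard) hpu
        obtain ⟨hq0, hge⟩ := sandRenyi_ge hpsd hσ.1 hα hss u hu hp0
        refine le_trans ?_ hge
        rw [EReal.coe_le_coe_iff, hK]
        have hq1 : (star u ⬝ᵥ σ *ᵥ u).re ≤ 1 := by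
          have h1 := qform_le_trace hσ.1 u hu
          have h3 : ((ptrans σ).trace).re ≤ traceNorm (ptrans σ) :=
            re_trace_le_traceNorm (ptrans_isHermitian hσ.1.1)
          rw [trace_ptrans] at h3
          have h2 : (σ.trace).re ≤ 1 := le_trans h3 hσ.2
          linarith
        have hlogq : Real.logb 2 ((star u ⬝ᵥ σ *ᵥ u).re) ≤ 0 :=
          Real.logb_nonpos (by norm_num) hq0.le hq1
        have hlogp : Real.logb 2 ((Fintype.card (Fin d × Fin d) : ℝ))⁻¹
            ≤ Real.logb 2 ((star u ⬝ᵥ Φt *ᵥ u).re) :=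
          Real.logb_le_logb_of_le (by norm_num) (inv_pos.2 hcard) hpu
        have hmono := mul_le_mul_of_nonneg_left hlogp hαpos.le
        linarith
      · rw [sandRenyi, if_neg ?_]
        · exact le_top
        · rintro (⟨-, h2⟩ | ⟨-, h2⟩)
          · linarith
          · exact hss h2
    have hinf : ((K : ℝ) : EReal) ≤ sandRains α Φt := le_iInf hper
    have hnb : sandRains α Φt ≠ ⊥ := by
      intro hbot
      rw [hbot] at hinf
      exact (not_le.2 (EReal.bot_lt_coe K)) hinf
    rw [EReal.add_top_of_ne_bot hnb]
    exact le_top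

end RainsPaper
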